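/- The function T(s) = (-2s + e^s - e^{-s}(2s + 3) + 2)/(4s²) is nonnegative for all real s ≠ 0, i.e., -2s + e^s - e^{-s}(2s + 3) + 2 ≥ 0 for all s ∈ ℝ. -/

import Mathlib

noncomputable def T : ℝ → ℝ := fun s =>
  (-2*s + Real.exp s - Real.exp (-s) * (2*s + 3) + 2) / (4*s^2)

private noncomputable def fAux (s : ℝ) : ℝ :=
  Real.exp (2*s) + (2 - 2*s) * Real.exp s - 2*s - 3

private lemma fAux_hasDerivAt (s : ℝ) :
    HasDerivAt fAux (2 * Real.exp (2*s) - 2*s * Real.exp s - 2) s := by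
  have h1 : HasDerivAt (fun t : ℝ => Real.exp (2*t)) (Real.exp (2*s) * 2) s :=
    (Real.hasDerivAt_exp (2*s)).comp s (by simpa using (hasDerivAt_id s).const_mul 2)
  have h2 : HasDerivAt (fun t : ℝ => (2 - 2*t) * Real.exp t)
      ((0 - 2) * Real.exp s + (2 - 2*s) * Real.exp s) s :=
    ((hasDerivAt_const s 2).sub (by simpa using (hasDerivAt_id s).const_mul 2)).mul
      (Real.hasDerivAt_exp s)
  have h3 : HasDerivAt (fun t : ℝ => 2*t) 2 s := by
    simpa using (hasDerivAt_id s).const_mul 2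
  have := ((h1.add h2).sub h3).sub (hasDerivAt_const s 3)
  have hfa : fAux = fun t : ℝ => Real.exp (2*t) + (2 - 2*t) * Real.exp t - 2*t - 3 := rfl
  rw [hfa]
  exact this.congr_deriv (by ring)

private lemma fAux_nonneg (s : ℝ) : 0 ≤ fAux s := by
  have hf0 : fAux 0 = 0 := by norm_num [fAux]
  have hcont : Continuous fAux := by
    have : ∀ t, HasDerivAt fAux (2 * Real.exp (2*t) - 2*t * Real.exp t - 2) t :=
      fAux_hasDerivAt
    exact continuous_iff_continuousAt.2 fun t => (this t).continuousAt
  rcases le_total 0 s with hs | hs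
  · -- monotone on [0, ∞)
    have hmono : MonotoneOn fAux (Set.Ici (0:ℝ)) := by
      apply monotoneOn_of_deriv_nonneg (convex_Ici 0) hcont.continuousOn
      · intro t _
        exact (fAux_hasDerivAt t).differentiableAt.differentiableWithinAt
      · intro t ht
        rw [(fAux_hasDerivAt t).deriv]
        have ht' : (0:ℝ) ≤ t := le_of_lt (by simpa using ht)
        have h1 : t + 1 ≤ Real.exp t := Real.add_one_le_exp t
        have h2 : (1:ℝ) ≤ Real.exp t := Real.one_le_exp ht'
        have h3 : Real.exp (2*t) = Real.exp t * Real.exp t := by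
          rw [← Real.exp_add]; ring_nf
        nlinarith [Real.exp_pos t]
    have := hmono (Set.mem_Ici.2 le_rfl) (Set.mem_Ici.2 hs) hs
    linarith [hf0 ▸ this]
  · -- antitone on (-∞, 0]
    have hanti : AntitoneOn fAux (Set.Iic (0:ℝ)) := by
      apply antitoneOn_of_deriv_nonpos (convex_Iic 0) hcont.continuousOn
      · intro t _
        exact (fAux_hasDerivAt t).differentiableAt.differentiableWithinAt
      · intro t ht
        rw [(fAux_hasDerivAt t).deriv]
        have ht' : t ≤ 0 := le_of_lt (by simpa using ht)
        have h1 : Real.exp t ≤ 1 := Real.exp_le_one_iff.2 ht'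
        have h2 : 1 - t ≤ Real.exp (-t) := by
          have := Real.add_one_le_exp (-t); linarith
        have h3 : Real.exp t * Real.exp (-t) = 1 := by
          rw [← Real.exp_add]; simp
        have h4 : Real.exp t * (1 - t) ≤ 1 := by
          calc Real.exp t * (1 - t) ≤ Real.exp t * Real.exp (-t) :=
                mul_le_mul_of_nonneg_left h2 (Real.exp_pos t).le
            _ = 1 := h3
        have h5 : Real.exp (2*t) = Real.exp t * Real.exp t := by
          rw [← Real.exp_add]; ring_nf
        nlinarith [Real.exp_pos t]
    have := hanti (Set.mem_Iic.2 hs) (Set.mem_Iic.2 le_rfl) hs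
    linarith [hf0 ▸ this]

private lemma num_nonneg (s : ℝ) :
    0 ≤ -2*s + Real.exp s - Real.exp (-s) * (2*s + 3) + 2 := by
  have key : -2*s + Real.exp s - Real.exp (-s) * (2*s + 3) + 2
      = Real.exp (-s) * fAux s := by
    have e1 : Real.exp (-s) * Real.exp (2*s) = Real.exp s := by
      rw [← Real.exp_add]; ring_nf
    have e2 : Real.exp (-s) * Real.exp s = 1 := by
      rw [← Real.exp_add]; simp
    simp only [fAux]
    linear_combination -e1 - (2 - 2*s) * e2
  rw [key]
  exact mul_nonneg (Real.exp_pos (-s)).le (fAux_nonneg s)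

theorem stmt_10 :
    (∀ s : ℝ, s ≠ 0 → 0 ≤ T s) ∧
    (∀ s : ℝ, 0 ≤ -2*s + Real.exp s - Real.exp (-s) * (2*s + 3) + 2) := by
  refine ⟨fun s hs => ?_, num_nonneg⟩
  unfold T
  apply div_nonneg (num_nonneg s)
  positivity
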